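/- Let G be a group, (H, f) a G-group, and I_1, …, I_n normal subgroups of H such that I_1 ∩ I_2 ∩ … ∩ I_n = {1} and such that for all j ≠ k the subgroup generated by I_j and I_k is all of H (I_j ⊔ I_k = ⊤, equivalently I_j·I_k = H). Then Spec²_G(H) is the disjoint union of the sets V²_H(I_1), …, V²_H(I_n); that is, Spec²_G(H) = ⋃_{j=1}^{n} V²_H(I_j), and V²_H(I_j) ∩ V²_H(I_k) = ∅ whenever j ≠ k. -/

import Mathlib

/-- The subgroup `G(x)` of `H` generated by the `G`-conjugates `f g * x * (f g)⁻¹` of `x`. -/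
def GConj {G H : Type*} [Group G] [Group H] (f : G →* H) (x : H) : Subgroup H :=
  Subgroup.closure {h : H | ∃ g : G, h = f g * x * (f g)⁻¹}

/-- `x` is a T1-divisor of zero of the `G`-group `(H, f)`. -/
def IsT1DivisorOfZero {G H : Type*} [Group G] [Group H] (f : G →* H) (x : H) : Prop :=
  x ≠ 1 ∧ ∃ y : H, y ≠ 1 ∧ ⁅GConj f x, GConj f y⁆ = ⊥

/-- `x` is a T2-divisor of zero of the `G`-group `(H, f)`. -/
def IsT2DivisorOfZero {G H : Type*} [Group G] [Group H] (f : G →* H) (x : H) : Prop :=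
  x ≠ 1 ∧ ∃ y : H, y ≠ 1 ∧ GConj f x ⊓ GConj f y = ⊥

/-- `I` is a T1-prime ideal of the `G`-group `(H, f)`: a normal subgroup, distinct from `H`,
such that `⁅G(x), G(y)⁆ ⊆ I` implies `x ∈ I` or `y ∈ I`. -/
def IsT1Prime {G H : Type*} [Group G] [Group H] (f : G →* H) (I : Subgroup H) : Prop :=
  I.Normal ∧ I ≠ ⊤ ∧ ∀ x y : H, ⁅GConj f x, GConj f y⁆ ≤ I → x ∈ I ∨ y ∈ I

/-- `I` is a T2-prime ideal of the `G`-group `(H, f)`: a normal subgroup, distinct from `H`,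
such that `G(x) ∩ G(y) ⊆ I` implies `x ∈ I` or `y ∈ I`. -/
def IsT2Prime {G H : Type*} [Group G] [Group H] (f : G →* H) (I : Subgroup H) : Prop :=
  I.Normal ∧ I ≠ ⊤ ∧ ∀ x y : H, GConj f x ⊓ GConj f y ≤ I → x ∈ I ∨ y ∈ I

/-- The T1-spectrum of the `G`-group `(H, f)`: the type of T1-prime ideals. -/
abbrev Spec1 {G H : Type*} [Group G] [Group H] (f : G →* H) : Type _ :=
  {P : Subgroup H // IsT1Prime f P}

/-- The T2-spectrum of the `G`-group `(H, f)`: the type of T2-prime ideals. -/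
abbrev Spec2 {G H : Type*} [Group G] [Group H] (f : G →* H) : Type _ :=
  {P : Subgroup H // IsT2Prime f P}

/-- `V¹_H(I)`: the set of T1-prime ideals containing `I`. -/
def V1 {G H : Type*} [Group G] [Group H] (f : G →* H) (I : Subgroup H) : Set (Spec1 f) :=
  {P | I ≤ P.val}

/-- `V²_H(I)`: the set of T2-prime ideals containing `I`. -/
def V2 {G H : Type*} [Group G] [Group H] (f : G →* H) (I : Subgroup H) : Set (Spec2 f) :=
  {P | I ≤ P.val}


lemma GConj_le_of_mem {G H : Type*} [Group G] [Group H] (f : G →* H) {I : Subgroup H}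
    (hI : I.Normal) {x : H} (hx : x ∈ I) : GConj f x ≤ I := by
  apply (Subgroup.closure_le _).mpr
  rintro h ⟨g, rfl⟩
  exact hI.conj_mem x hx (f g)

lemma prime_inf {G H : Type*} [Group G] [Group H] (f : G →* H) {P I J : Subgroup H}
    (hP : IsT2Prime f P) (hI : I.Normal) (hJ : J.Normal) (h : I ⊓ J ≤ P) :
    I ≤ P ∨ J ≤ P := by
  by_cases hIP : I ≤ P
  · exact Or.inl hIP
  · right
    obtain ⟨x, hxI, hxP⟩ := SetLike.not_le_iff_exists.mp hIP
    intro y hy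
    rcases hP.2.2 x y (le_trans (inf_le_inf (GConj_le_of_mem f hI hxI)
        (GConj_le_of_mem f hJ hy)) h) with h' | h'
    · exact absurd h' hxP
    · exact h'

lemma normal_biInf {H : Type*} [Group H] {ι : Type*} (s : Finset ι) (I : ι → Subgroup H)
    (hnorm : ∀ j, (I j).Normal) : (⨅ j ∈ s, I j).Normal := by
  constructor
  intro x hx g
  simp only [Subgroup.mem_iInf] at hx ⊢
  intro j hj
  exact (hnorm j).conj_mem x (hx j hj) g

lemma prime_biInf {G H : Type*} [Group G] [Group H] (f : G →* H) {P : Subgroup H}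
    (hP : IsT2Prime f P) {ι : Type*} [DecidableEq ι] (s : Finset ι) (I : ι → Subgroup H)
    (hnorm : ∀ j, (I j).Normal) (h : (⨅ j ∈ s, I j) ≤ P) : ∃ j ∈ s, I j ≤ P := by
  induction s using Finset.induction_on with
  | empty =>
    simp only [Finset.notMem_empty, iInf_false, iInf_top] at h
    exact absurd (top_le_iff.mp h) hP.2.1
  | insert _ _ ha ih =>
    rename_i a s
    rw [Finset.iInf_insert] at h
    rcases prime_inf f hP (hnorm a) (normal_biInf s I hnorm) h with h' | h'
    · exact ⟨a, Finset.mem_insert_self a s, h'⟩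
    · obtain ⟨j, hj, hj'⟩ := ih h'
      exact ⟨j, Finset.mem_insert_of_mem hj, hj'⟩

theorem spec2_disjoint_union {G H : Type*} [Group G] [Group H] (f : G →* H) (n : ℕ)
    (I : Fin n → Subgroup H) (hnorm : ∀ j, (I j).Normal)
    (hinf : (⨅ j, I j) = ⊥) (hsup : ∀ j k, j ≠ k → I j ⊔ I k = ⊤) :
    (⋃ j, V2 f (I j)) = Set.univ ∧ ∀ j k, j ≠ k → V2 f (I j) ∩ V2 f (I k) = ∅ := by
  constructor
  · ext P
    simp only [Set.mem_iUnion, Set.mem_univ, iff_true]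
    have h : (⨅ j ∈ Finset.univ, I j) ≤ P.val := by
      simp only [Finset.mem_univ, iInf_true, hinf]
      exact bot_le
    obtain ⟨j, _, hj⟩ := prime_biInf f P.2 Finset.univ I hnorm h
    exact ⟨j, hj⟩
  · intro j k hjk
    ext P
    simp only [Set.mem_inter_iff, Set.mem_empty_iff_false, iff_false, not_and]
    intro hj hk
    exact P.2.2.1 (top_le_iff.mp ((hsup j k hjk) ▸ sup_le hj hk))
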